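/- arXiv:2105.04600 — 2 statements merged into one kernel-verified Lean document; each statement's English description precedes it below -/
import Mathlib

section
/- Let u be harmonic-type in the sense that it satisfies −Δu = f/a with constant coefficient a ≠ 0 near a point. Then for every pair (m', n') with m' ≥ 2, one has u^{(m',n')} = (−1)^{⌊m'/2⌋} u^{(odd(m'), n'+m'−odd(m'))} + Σ_{ℓ=1}^{⌊m'/2⌋} (−1)^ℓ f^{(m'−2ℓ, n'+2ℓ−2)}/a, where g^{(m,n)} denotes the (m,n)-th partial derivative at the point and odd(m') ∈ {0,1} is the parity of m'. -/
noncomputable def pdx (f : ℝ → ℝ → ℝ) : ℝ → ℝ → ℝ := fun x y => deriv (fun t => f t y) x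

noncomputable def pdy (f : ℝ → ℝ → ℝ) : ℝ → ℝ → ℝ := fun x y => deriv (fun t => f x t) y

/-- The iterated partial derivative `∂^{m+n}/∂x^m∂y^n`. -/
noncomputable def pd (m n : ℕ) (f : ℝ → ℝ → ℝ) : ℝ → ℝ → ℝ := pdx^[m] (pdy^[n] f)

namespace HDAux

abbrev Sm (f : ℝ → ℝ → ℝ) : Prop := ContDiff ℝ (⊤ : ℕ∞) fun p : ℝ × ℝ => f p.1 p.2

lemma slice_x {f : ℝ → ℝ → ℝ} (hf : Sm f) (x y : ℝ) :
    HasDerivAt (fun t => f t y) (fderiv ℝ (fun p : ℝ × ℝ => f p.1 p.2) (x, y) (1, 0)) x := by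
  have h1 : HasDerivAt (fun t : ℝ => (t, y)) ((1 : ℝ), (0 : ℝ)) x :=
    (hasDerivAt_id x).prodMk (hasDerivAt_const x y)
  have h2 := (hf.differentiable (by simp) (x, y)).hasFDerivAt
  exact h2.comp_hasDerivAt x h1

lemma slice_y {f : ℝ → ℝ → ℝ} (hf : Sm f) (x y : ℝ) :
    HasDerivAt (fun t => f x t) (fderiv ℝ (fun p : ℝ × ℝ => f p.1 p.2) (x, y) (0, 1)) y := by
  have h1 : HasDerivAt (fun t : ℝ => (x, t)) ((0 : ℝ), (1 : ℝ)) y :=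
    (hasDerivAt_const y x).prodMk (hasDerivAt_id y)
  have h2 := (hf.differentiable (by simp) (x, y)).hasFDerivAt
  exact h2.comp_hasDerivAt y h1

lemma pdx_eq {f : ℝ → ℝ → ℝ} (hf : Sm f) (x y : ℝ) :
    pdx f x y = fderiv ℝ (fun p : ℝ × ℝ => f p.1 p.2) (x, y) (1, 0) :=
  (slice_x hf x y).deriv

lemma pdy_eq {f : ℝ → ℝ → ℝ} (hf : Sm f) (x y : ℝ) :
    pdy f x y = fderiv ℝ (fun p : ℝ × ℝ => f p.1 p.2) (x, y) (0, 1) :=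
  (slice_y hf x y).deriv

lemma letop : ((⊤:ℕ∞) : WithTop ℕ∞) + 1 ≤ ((⊤:ℕ∞) : WithTop ℕ∞) := by
  exact_mod_cast le_top

lemma letop' : (1 : WithTop ℕ∞) ≤ ((⊤:ℕ∞) : WithTop ℕ∞) := by exact_mod_cast le_top

lemma smooth_fderiv_apply {F : ℝ × ℝ → ℝ} (hF : ContDiff ℝ (⊤ : ℕ∞) F) (v : ℝ × ℝ) :
    ContDiff ℝ (⊤ : ℕ∞) fun p => fderiv ℝ F p v :=
  (ContinuousLinearMap.apply ℝ ℝ v).contDiff.comp (hF.fderiv_right letop)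

lemma smooth_pdx {f : ℝ → ℝ → ℝ} (hf : Sm f) : Sm (pdx f) := by
  have : (fun p : ℝ × ℝ => pdx f p.1 p.2)
      = fun p => fderiv ℝ (fun p : ℝ × ℝ => f p.1 p.2) p (1, 0) :=
    funext fun p => pdx_eq hf p.1 p.2
  rw [Sm, this]
  exact smooth_fderiv_apply hf _

lemma smooth_pdy {f : ℝ → ℝ → ℝ} (hf : Sm f) : Sm (pdy f) := by
  have : (fun p : ℝ × ℝ => pdy f p.1 p.2)
      = fun p => fderiv ℝ (fun p : ℝ × ℝ => f p.1 p.2) p (0, 1) :=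
    funext fun p => pdy_eq hf p.1 p.2
  rw [Sm, this]
  exact smooth_fderiv_apply hf _

lemma comm_one {f : ℝ → ℝ → ℝ} (hf : Sm f) : pdx (pdy f) = pdy (pdx f) := by
  funext x y
  set F : ℝ × ℝ → ℝ := fun p => f p.1 p.2 with hFdef
  have hder : DifferentiableAt ℝ (fderiv ℝ F) (x, y) :=
    ((hf.fderiv_right letop).differentiable (by simp)) (x, y)
  have key : ∀ v w : ℝ × ℝ,
      fderiv ℝ (fun p => fderiv ℝ F p v) (x, y) w
        = fderiv ℝ (fderiv ℝ F) (x, y) w v := by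
    intro v w
    have h3 : HasFDerivAt (fun p => fderiv ℝ F p v)
        (((ContinuousLinearMap.apply ℝ ℝ v)).comp (fderiv ℝ (fderiv ℝ F) (x, y))) (x, y) :=
      (ContinuousLinearMap.apply ℝ ℝ v).hasFDerivAt.comp (x, y) hder.hasFDerivAt
    rw [h3.fderiv]
    rfl
  have hsymm : fderiv ℝ (fderiv ℝ F) (x, y) (1, 0) (0, 1)
      = fderiv ℝ (fderiv ℝ F) (x, y) (0, 1) (1, 0) := by
    refine second_derivative_symmetric (f := F) (fun z => ?_) hder.hasFDerivAt _ _
    exact (hf.differentiable (by simp) z).hasFDerivAt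
  have hry : (fun p : ℝ × ℝ => pdy f p.1 p.2) = fun p : ℝ × ℝ => fderiv ℝ F p (0, 1) :=
    funext fun p => pdy_eq hf p.1 p.2
  have hrx : (fun p : ℝ × ℝ => pdx f p.1 p.2) = fun p : ℝ × ℝ => fderiv ℝ F p (1, 0) :=
    funext fun p => pdx_eq hf p.1 p.2
  have e1 : pdx (pdy f) x y = fderiv ℝ (fun p => fderiv ℝ F p (0, 1)) (x, y) (1, 0) := by
    rw [pdx_eq (smooth_pdy hf) x y, hry]
  have e2 : pdy (pdx f) x y = fderiv ℝ (fun p => fderiv ℝ F p (1, 0)) (x, y) (0, 1) := by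
    rw [pdy_eq (smooth_pdx hf) x y, hrx]
  rw [e1, e2, key, key, hsymm]

lemma smooth_pdyIter {f : ℝ → ℝ → ℝ} (hf : Sm f) (n : ℕ) : Sm (pdy^[n] f) := by
  induction n with
  | zero => exact hf
  | succ n ih => rw [Function.iterate_succ_apply']; exact smooth_pdy ih

lemma smooth_pd {f : ℝ → ℝ → ℝ} (hf : Sm f) (m n : ℕ) : Sm (pd m n f) := by
  unfold pd
  induction m with
  | zero => exact smooth_pdyIter hf n
  | succ m ih => rw [Function.iterate_succ_apply']; exact smooth_pdx ih

lemma comm_iter {f : ℝ → ℝ → ℝ} (hf : Sm f) (n : ℕ) :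
    pdx (pdy^[n] f) = pdy^[n] (pdx f) := by
  induction n generalizing f with
  | zero => rfl
  | succ n ih =>
    rw [Function.iterate_succ_apply', comm_one (smooth_pdyIter hf n), ih hf]
    exact (Function.iterate_succ_apply' pdy n (pdx f)).symm


lemma pdx_local {O : Set (ℝ × ℝ)} (hO : IsOpen O) {f g : ℝ → ℝ → ℝ}
    (h : ∀ p ∈ O, f p.1 p.2 = g p.1 p.2) :
    ∀ p ∈ O, pdx f p.1 p.2 = pdx g p.1 p.2 := by
  intro p hp
  apply Filter.EventuallyEq.deriv_eq
  have hc : Continuous fun t : ℝ => (t, p.2) := by fun_prop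
  have hm : (fun t : ℝ => (t, p.2)) ⁻¹' O ∈ nhds p.1 :=
    hc.continuousAt.preimage_mem_nhds (hO.mem_nhds (by simpa using hp))
  filter_upwards [hm] with t ht using h (t, p.2) ht

lemma pdy_local {O : Set (ℝ × ℝ)} (hO : IsOpen O) {f g : ℝ → ℝ → ℝ}
    (h : ∀ p ∈ O, f p.1 p.2 = g p.1 p.2) :
    ∀ p ∈ O, pdy f p.1 p.2 = pdy g p.1 p.2 := by
  intro p hp
  apply Filter.EventuallyEq.deriv_eq
  have hc : Continuous fun t : ℝ => (p.1, t) := by fun_prop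
  have hm : (fun t : ℝ => (p.1, t)) ⁻¹' O ∈ nhds p.2 :=
    hc.continuousAt.preimage_mem_nhds (hO.mem_nhds (by simpa using hp))
  filter_upwards [hm] with t ht using h (p.1, t) ht

lemma pdyIter_local {O : Set (ℝ × ℝ)} (hO : IsOpen O) {f g : ℝ → ℝ → ℝ}
    (h : ∀ p ∈ O, f p.1 p.2 = g p.1 p.2) (n : ℕ) :
    ∀ p ∈ O, pdy^[n] f p.1 p.2 = pdy^[n] g p.1 p.2 := by
  induction n with
  | zero => exact h
  | succ n ih =>
    rw [Function.iterate_succ_apply', Function.iterate_succ_apply']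
    exact pdy_local hO ih

lemma pd_local {O : Set (ℝ × ℝ)} (hO : IsOpen O) {f g : ℝ → ℝ → ℝ}
    (h : ∀ p ∈ O, f p.1 p.2 = g p.1 p.2) (m n : ℕ) :
    ∀ p ∈ O, pd m n f p.1 p.2 = pd m n g p.1 p.2 := by
  unfold pd
  induction m with
  | zero => exact pdyIter_local hO h n
  | succ m ih =>
    rw [Function.iterate_succ_apply', Function.iterate_succ_apply']
    exact pdx_local hO ih

lemma pdx_comb {P Q : ℝ → ℝ → ℝ} (hP : Sm P) (hQ : Sm Q) (c : ℝ) :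
    pdx (fun x y => -P x y - Q x y * c) = fun x y => -pdx P x y - pdx Q x y * c := by
  funext x y
  have h1 := slice_x hP x y
  have h2 := slice_x hQ x y
  have h3 := ((h1.neg).sub (h2.mul_const c)).deriv
  show deriv ((-fun t => P t y) - fun t => Q t y * c) x = _
  rw [h3, ← pdx_eq hP, ← pdx_eq hQ]

lemma pdy_comb {P Q : ℝ → ℝ → ℝ} (hP : Sm P) (hQ : Sm Q) (c : ℝ) :
    pdy (fun x y => -P x y - Q x y * c) = fun x y => -pdy P x y - pdy Q x y * c := by
  funext x y
  have h1 := slice_y hP x y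
  have h2 := slice_y hQ x y
  have h3 := ((h1.neg).sub (h2.mul_const c)).deriv
  show deriv ((-fun t => P x t) - fun t => Q x t * c) y = _
  rw [h3, ← pdy_eq hP, ← pdy_eq hQ]

lemma pdyIter_comb (c : ℝ) (n : ℕ) :
    ∀ (P Q : ℝ → ℝ → ℝ), Sm P → Sm Q →
    pdy^[n] (fun x y => -P x y - Q x y * c)
      = fun x y => -(pdy^[n] P x y) - pdy^[n] Q x y * c := by
  induction n with
  | zero => intro P Q _ _; rfl
  | succ n ih =>
    intro P Q hP hQ
    rw [Function.iterate_succ_apply', ih P Q hP hQ, pdy_comb (smooth_pdyIter hP n)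
      (smooth_pdyIter hQ n) c, Function.iterate_succ_apply', Function.iterate_succ_apply']

lemma pd_comb (c : ℝ) (m n : ℕ) :
    ∀ (P Q : ℝ → ℝ → ℝ), Sm P → Sm Q →
    pd m n (fun x y => -P x y - Q x y * c)
      = fun x y => -(pd m n P x y) - pd m n Q x y * c := by
  unfold pd
  induction m with
  | zero => exact pdyIter_comb c n
  | succ m ih =>
    intro P Q hP hQ
    rw [Function.iterate_succ_apply', ih P Q hP hQ,
      pdx_comb (P := pdx^[m] (pdy^[n] P)) (Q := pdx^[m] (pdy^[n] Q))
        (smooth_pd hP m n) (smooth_pd hQ m n) c]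
    simp [Function.iterate_succ_apply']


lemma step (a : ℝ) {u f : ℝ → ℝ → ℝ} (hu : Sm u) (hf : Sm f)
    {O : Set (ℝ × ℝ)} (hO : IsOpen O)
    (hbase : ∀ p ∈ O, pd 2 0 u p.1 p.2 = -(pd 0 2 u p.1 p.2) - f p.1 p.2 * a⁻¹)
    (m n : ℕ) : ∀ p ∈ O, pd (m + 2) n u p.1 p.2
      = -(pd m (n + 2) u p.1 p.2) - pd m n f p.1 p.2 * a⁻¹ := by
  intro p hp
  have e2 : ∀ g : ℝ → ℝ → ℝ, pdx^[2] g = pdx (pdx g) := by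
    intro g; rw [Function.iterate_succ_apply', Function.iterate_one]
  have hcomm2 : pdx^[2] (pdy^[n] u) = pdy^[n] (pdx^[2] u) := by
    rw [e2 (pdy^[n] u), comm_iter hu n, comm_iter (smooth_pdx hu) n, ← e2 u]
  have e1 : pd (m + 2) n u = pd m n (pd 2 0 u) := by
    show pdx^[m + 2] (pdy^[n] u) = pdx^[m] (pdy^[n] (pdx^[2] (pdy^[0] u)))
    rw [Function.iterate_add_apply pdx m 2, hcomm2]
    rfl
  have e3 : pd m n (pd 0 2 u) = pd m (n + 2) u := by
    show pdx^[m] (pdy^[n] (pdx^[0] (pdy^[2] u))) = pdx^[m] (pdy^[n + 2] u)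
    rw [Function.iterate_add_apply pdy n 2]
    rfl
  have hloc := pd_local (g := fun x y => -(pd 0 2 u x y) - f x y * a⁻¹) hO hbase m n p hp
  have hcombined := pd_comb a⁻¹ m n (pd 0 2 u) f (smooth_pd hu 0 2) hf
  calc pd (m + 2) n u p.1 p.2 = pd m n (pd 2 0 u) p.1 p.2 := by rw [e1]
    _ = pd m n (fun x y => -(pd 0 2 u x y) - f x y * a⁻¹) p.1 p.2 := hloc
    _ = -(pd m n (pd 0 2 u) p.1 p.2) - pd m n f p.1 p.2 * a⁻¹ := by rw [hcombined]
    _ = -(pd m (n + 2) u p.1 p.2) - pd m n f p.1 p.2 * a⁻¹ := by rw [e3]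

lemma main (a : ℝ) {u f : ℝ → ℝ → ℝ} (hu : Sm u) (hf : Sm f)
    {O : Set (ℝ × ℝ)} (hO : IsOpen O)
    (hbase : ∀ p ∈ O, pd 2 0 u p.1 p.2 = -(pd 0 2 u p.1 p.2) - f p.1 p.2 * a⁻¹) :
    ∀ m n : ℕ, ∀ p ∈ O, pd m n u p.1 p.2
      = (-1 : ℝ) ^ (m / 2) * pd (m % 2) (n + m - m % 2) u p.1 p.2 +
        ∑ ℓ ∈ Finset.Icc 1 (m / 2),
          (-1 : ℝ) ^ ℓ * pd (m - 2 * ℓ) (n + 2 * ℓ - 2) f p.1 p.2 / a := by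
  intro m
  induction m using Nat.strong_induction_on with
  | _ m IH =>
    obtain _ | _ | m := m
    · intro n p hp
      simp
    · intro n p hp
      simp
    · intro n p hp
      have hstep := step a hu hf hO hbase m n p hp
      have hIH := IH m (by omega) (n + 2) p hp
      have hdiv : (m + 2) / 2 = m / 2 + 1 := by omega
      have hmod : (m + 2) % 2 = m % 2 := by omega
      rw [hstep, hIH]
      simp only [show m + 1 + 1 = m + 2 from rfl]
      rw [hdiv, hmod]
      have hidx : n + (m + 2) - m % 2 = n + 2 + m - m % 2 := by omega
      rw [hidx]
      have hsum : (∑ ℓ ∈ Finset.Icc 1 (m / 2 + 1),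
            (-1 : ℝ) ^ ℓ * pd (m + 2 - 2 * ℓ) (n + 2 * ℓ - 2) f p.1 p.2 / a)
          = -(∑ ℓ ∈ Finset.Icc 1 (m / 2),
              (-1 : ℝ) ^ ℓ * pd (m - 2 * ℓ) (n + 2 + 2 * ℓ - 2) f p.1 p.2 / a)
            - pd m n f p.1 p.2 / a := by
        rw [← Finset.Ico_add_one_right_eq_Icc, ← Finset.Ico_add_one_right_eq_Icc, Finset.sum_Ico_eq_sum_range,
          Finset.sum_Ico_eq_sum_range]
        simp only [Nat.add_sub_cancel]
        rw [Finset.sum_range_succ']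
        have hterm : ∀ i : ℕ,
            (-1 : ℝ) ^ (1 + (i + 1)) * pd (m + 2 - 2 * (1 + (i + 1)))
                (n + 2 * (1 + (i + 1)) - 2) f p.1 p.2 / a
            = -((-1 : ℝ) ^ (1 + i) * pd (m - 2 * (1 + i))
                (n + 2 + 2 * (1 + i) - 2) f p.1 p.2 / a) := by
          intro i
          have i1 : m + 2 - 2 * (1 + (i + 1)) = m - 2 * (1 + i) := by omega
          have i2 : n + 2 * (1 + (i + 1)) - 2 = n + 2 + 2 * (1 + i) - 2 := by omega
          have i3 : 1 + (i + 1) = (1 + i) + 1 := by omega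
          rw [i1, i2, i3, pow_succ]
          ring
        rw [Finset.sum_congr rfl (fun i _ => hterm i)]
        have j1 : m + 2 - 2 * (1 + 0) = m := by omega
        have j2 : n + 2 * (1 + 0) - 2 = n := by omega
        rw [j1, j2, Finset.sum_neg_distrib]
        ring
      rw [hsum, pow_succ]
      ring

end HDAux

/-- If `u` satisfies `a(u_xx + u_yy) = -f` with nonzero constant `a` near a point,
then for every `(m',n')` with `m' ≥ 2`,
`u^{(m',n')} = (-1)^{⌊m'/2⌋} u^{(odd(m'), n'+m'-odd(m'))}
+ Σ_{ℓ=1}^{⌊m'/2⌋} (-1)^ℓ f^{(m'-2ℓ, n'+2ℓ-2)}/a`. -/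
theorem high_deriv_identity (a : ℝ) (ha : a ≠ 0) (u f : ℝ → ℝ → ℝ)
    (hu : ContDiff ℝ (⊤ : ℕ∞) fun p : ℝ × ℝ => u p.1 p.2)
    (hf : ContDiff ℝ (⊤ : ℕ∞) fun p : ℝ × ℝ => f p.1 p.2)
    (xs ys : ℝ) (s : Set (ℝ × ℝ)) (hs : s ∈ nhds (xs, ys))
    (heq : ∀ p ∈ s, a * (pd 2 0 u p.1 p.2 + pd 0 2 u p.1 p.2) = - f p.1 p.2)
    (m' n' : ℕ) (hm : 2 ≤ m') :
    pd m' n' u xs ys =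
      (-1 : ℝ) ^ (m' / 2) * pd (m' % 2) (n' + m' - m' % 2) u xs ys +
        ∑ ℓ ∈ Finset.Icc 1 (m' / 2),
          (-1 : ℝ) ^ ℓ * pd (m' - 2 * ℓ) (n' + 2 * ℓ - 2) f xs ys / a := by
  have hxs : (xs, ys) ∈ interior s := mem_interior_iff_mem_nhds.2 hs
  have hbase : ∀ p ∈ interior s,
      pd 2 0 u p.1 p.2 = -(pd 0 2 u p.1 p.2) - f p.1 p.2 * a⁻¹ := by
    intro p hp
    have h := heq p (interior_subset hp)
    have h2 : a * pd 2 0 u p.1 p.2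
        = a * (-(pd 0 2 u p.1 p.2) - f p.1 p.2 * a⁻¹) := by
      field_simp
      linarith
    exact mul_left_cancel₀ ha h2
  exact HDAux.main a hu hf isOpen_interior hbase m' n' (xs, ys) hxs
end

section
/- Let r, s : (−ε, ε) → ℝ be smooth with r(0) = s(0) = 0 and (r'(0))² + (s'(0))² > 0, and a₀ ≠ 0. For p ≥ 1, define g_{m,n,p} := (1/p!) dᵖ/dtᵖ [G_{m,n}(r(t), s(t))] at t = 0 and g̃_{m,n,p−1} := (a₀/(p−1)!) d^{p−1}/dt^{p−1} [∇G_{m,n}(r(t),s(t)) · (s'(t), −r'(t))] at t = 0, where G_{m,n}(x,y) := Σ_{ℓ=0}^{⌊n/2⌋} (−1)^ℓ x^{m+2ℓ}y^{n−2ℓ}/((m+2ℓ)!(n−2ℓ)!). Then for every p = 1,…,M: g_{0,p,p}·g̃_{1,p−1,p−1} − g_{1,p−1,p}·g̃_{0,p,p−1} > 0. -/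
noncomputable def G (m n : ℕ) : ℝ → ℝ → ℝ := fun x y =>
  ∑ ℓ ∈ Finset.range (n / 2 + 1),
    (-1 : ℝ) ^ ℓ * x ^ (m + 2 * ℓ) * y ^ (n - 2 * ℓ) /
      ((Nat.factorial (m + 2 * ℓ) : ℝ) * (Nat.factorial (n - 2 * ℓ) : ℝ))

/-- `g_{m,n,p} = (1/p!) dᵖ/dtᵖ [G_{m,n}(r(t), s(t))]|_{t=0}`. -/
noncomputable def gcoef (r s : ℝ → ℝ) (m n p : ℕ) : ℝ :=
  (1 / (Nat.factorial p : ℝ)) * iteratedDeriv p (fun t => G m n (r t) (s t)) 0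

/-- `g̃_{m,n,p} = (a₀/p!) dᵖ/dtᵖ [∇G_{m,n}(r(t),s(t)) · (s'(t), -r'(t))]|_{t=0}`. -/
noncomputable def gtcoef (a₀ : ℝ) (r s : ℝ → ℝ) (m n p : ℕ) : ℝ :=
  (a₀ / (Nat.factorial p : ℝ)) *
    iteratedDeriv p
      (fun t => pdx (G m n) (r t) (s t) * deriv s t - pdy (G m n) (r t) (s t) * deriv r t) 0

set_option maxHeartbeats 1000000

private lemma smoothOn_deriv {E : Type*} [NormedAddCommGroup E] [NormedSpace ℝ E] {U : Set ℝ}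
    (hU : IsOpen U) {f : ℝ → E} (hf : ContDiffOn ℝ (⊤:ℕ∞) f U) :
    ContDiffOn ℝ (⊤:ℕ∞) (deriv f) U := hf.deriv_of_isOpen hU (by exact_mod_cast le_top)

private lemma diffAt {E : Type*} [NormedAddCommGroup E] [NormedSpace ℝ E] {U : Set ℝ}
    (hU : IsOpen U) {f : ℝ → E} (hf : ContDiffOn ℝ (⊤:ℕ∞) f U)
    {x : ℝ} (hx : x ∈ U) : DifferentiableAt ℝ f x :=
  (hf.contDiffAt (hU.mem_nhds hx)).differentiableAt (by simp)

private lemma evEq_iteratedDeriv {E : Type*} [NormedAddCommGroup E] [NormedSpace ℝ E]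
    {f g : ℝ → E} {x : ℝ} (h : f =ᶠ[nhds x] g) (n : ℕ) :
    iteratedDeriv n f x = iteratedDeriv n g x := by
  induction n generalizing f g with
  | zero => simpa using h.eq_of_nhds
  | succ n ih => rw [iteratedDeriv_succ', iteratedDeriv_succ']; exact ih h.deriv

private lemma hasDerivAt_pow_comp {f : ℝ → ℂ} {f' : ℂ} {x : ℝ} (n : ℕ)
    (hf : HasDerivAt f f' x) :
    HasDerivAt (fun t => f t ^ n) ((n : ℂ) * f x ^ (n - 1) * f') x := by
  induction n with
  | zero => simpa using hasDerivAt_const x (1:ℂ)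
  | succ n ih =>
    have h2 : (fun t => f t ^ (n+1)) = fun t => f t ^ n * f t := by
      funext t; rw [pow_succ]
    rw [h2]
    have hm : HasDerivAt (fun t => f t ^ n * f t)
        ((n:ℂ) * f x ^ (n - 1) * f' * f x + f x ^ n * f') x := ih.fun_mul hf
    convert hm using 1
    rcases Nat.eq_zero_or_pos n with rfl | hn
    · simp
    · have hn1 : n - 1 + 1 = n := Nat.succ_pred_eq_of_pos hn
      have hp : f x ^ (n - 1) * f x = f x ^ n := by rw [← pow_succ, hn1]
      push_cast
      rw [← hp]; ring

private lemma iteratedDeriv_re' {U : Set ℝ} (hU : IsOpen U) {x : ℝ} (hx : x ∈ U) :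
    ∀ (n : ℕ) (f : ℝ → ℂ), ContDiffOn ℝ (⊤:ℕ∞) f U →
      iteratedDeriv n (fun t => (f t).re) x = (iteratedDeriv n f x).re := by
  intro n
  induction n with
  | zero => intro f hf; simp
  | succ n ih =>
    intro f hf
    rw [iteratedDeriv_succ', iteratedDeriv_succ']
    have hev : deriv (fun t => (f t).re) =ᶠ[nhds x] fun t => (deriv f t).re := by
      filter_upwards [hU.mem_nhds hx] with t ht
      have hd := (diffAt hU hf ht).hasDerivAt
      exact (Complex.reCLM.hasFDerivAt.comp_hasDerivAt t hd).deriv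
    rw [evEq_iteratedDeriv hev, ih (deriv f) (smoothOn_deriv hU hf)]

private lemma iteratedDeriv_im' {U : Set ℝ} (hU : IsOpen U) {x : ℝ} (hx : x ∈ U) :
    ∀ (n : ℕ) (f : ℝ → ℂ), ContDiffOn ℝ (⊤:ℕ∞) f U →
      iteratedDeriv n (fun t => (f t).im) x = (iteratedDeriv n f x).im := by
  intro n
  induction n with
  | zero => intro f hf; simp
  | succ n ih =>
    intro f hf
    rw [iteratedDeriv_succ', iteratedDeriv_succ']
    have hev : deriv (fun t => (f t).im) =ᶠ[nhds x] fun t => (deriv f t).im := by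
      filter_upwards [hU.mem_nhds hx] with t ht
      have hd := (diffAt hU hf ht).hasDerivAt
      exact (Complex.imCLM.hasFDerivAt.comp_hasDerivAt t hd).deriv
    rw [evEq_iteratedDeriv hev, ih (deriv f) (smoothOn_deriv hU hf)]

private lemma keyD {U : Set ℝ} (hU : IsOpen U) (h0 : (0:ℝ) ∈ U) {w : ℝ → ℂ}
    (hw : ContDiffOn ℝ (⊤:ℕ∞) w U) (hw0 : w 0 = 0) :
    ∀ (k j : ℕ), k ≤ j → ∀ (u : ℝ → ℂ), ContDiffOn ℝ (⊤:ℕ∞) u U →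
      iteratedDeriv k (fun t => w t ^ j * u t) 0 =
        if k = j then (Nat.factorial j : ℂ) * (deriv w 0) ^ j * u 0 else 0 := by
  intro k
  induction k with
  | zero =>
    intro j hj u hu
    rcases Nat.eq_zero_or_pos j with rfl | hjpos
    · simp
    · have hne : (0:ℕ) ≠ j := by omega
      simp [iteratedDeriv_zero, hw0, zero_pow (by omega : j ≠ 0), hne]
  | succ k ih =>
    intro j hj u hu
    obtain ⟨j', rfl⟩ : ∃ j', j = j' + 1 := ⟨j - 1, by omega⟩
    rw [iteratedDeriv_succ']
    have hev : deriv (fun t => w t ^ (j' + 1) * u t) =ᶠ[nhds (0:ℝ)]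
        fun t => w t ^ j' * (((j':ℂ) + 1) * deriv w t * u t + w t * deriv u t) := by
      filter_upwards [hU.mem_nhds h0] with t ht
      have hwt := (diffAt hU hw ht).hasDerivAt
      have hut := (diffAt hU hu ht).hasDerivAt
      have hpow := hasDerivAt_pow_comp (j' + 1) hwt
      rw [(hpow.fun_mul hut).deriv]
      push_cast [Nat.add_sub_cancel]
      ring
    rw [evEq_iteratedDeriv hev]
    have hvs : ContDiffOn ℝ (⊤:ℕ∞) (fun t => ((j':ℂ) + 1) * deriv w t * u t + w t * deriv u t) U :=
      ((contDiffOn_const.mul (smoothOn_deriv hU hw)).mul hu).add (hw.mul (smoothOn_deriv hU hu))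
    rw [ih j' (by omega) _ hvs]
    by_cases hkj : k = j'
    · subst hkj
      simp only [if_pos rfl, hw0, zero_mul, add_zero]
      rw [Nat.factorial_succ]
      push_cast
      ring
    · rw [if_neg hkj, if_neg (by omega)]

private lemma neg_one_pow_re (m : ℕ) : ((-1:ℂ)^m).re = (-1:ℝ)^m := by
  rw [show ((-1:ℂ)) = (((-1:ℝ)):ℂ) by norm_num, ← Complex.ofReal_pow, Complex.ofReal_re]

private lemma neg_one_pow_im (m : ℕ) : ((-1:ℂ)^m).im = 0 := by
  rw [show ((-1:ℂ)) = (((-1:ℝ)):ℂ) by norm_num, ← Complex.ofReal_pow, Complex.ofReal_im]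

private lemma I_pow_re (k : ℕ) :
    (Complex.I ^ k).re = if k % 2 = 0 then (-1:ℝ)^(k/2) else 0 := by
  rcases Nat.even_or_odd k with ⟨m, rfl⟩ | ⟨m, rfl⟩
  · rw [← two_mul, pow_mul, Complex.I_sq]
    have h1 : (2*m) % 2 = 0 := by omega
    have h2 : (2*m) / 2 = m := by omega
    simp [neg_one_pow_re, h1, h2]
  · rw [pow_succ, pow_mul, Complex.I_sq]
    have h1 : ¬ ((2*m+1) % 2 = 0) := by omega
    simp [Complex.mul_re, Complex.I_re, Complex.I_im, neg_one_pow_re, neg_one_pow_im, h1]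

private lemma I_pow_im (k : ℕ) :
    (Complex.I ^ k).im = if k % 2 = 1 then (-1:ℝ)^(k/2) else 0 := by
  rcases Nat.even_or_odd k with ⟨m, rfl⟩ | ⟨m, rfl⟩
  · rw [← two_mul, pow_mul, Complex.I_sq]
    have h1 : ¬ ((2*m) % 2 = 1) := by omega
    simp [neg_one_pow_im, h1]
  · rw [pow_succ, pow_mul, Complex.I_sq]
    have h1 : (2*m+1) % 2 = 1 := by omega
    have h2 : (2*m+1) / 2 = m := by omega
    simp [Complex.mul_im, Complex.I_re, Complex.I_im, neg_one_pow_re, neg_one_pow_im, h1, h2]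

private lemma zpow_expand (n : ℕ) (x y : ℝ) :
    ((y:ℂ) + x*Complex.I)^n =
      ∑ k ∈ Finset.range (n+1),
        ((x^k * y^(n-k) * (n.choose k : ℝ) : ℝ) : ℂ) * Complex.I ^ k := by
  rw [add_comm, add_pow]
  refine Finset.sum_congr rfl fun k _ => ?_
  rw [mul_pow]
  push_cast
  ring

private lemma G0_eq (n : ℕ) (x y : ℝ) :
    G 0 n x y = (((y:ℂ) + x*Complex.I)^n).re / (Nat.factorial n : ℝ) := by
  rw [zpow_expand, Complex.re_sum]
  have hterm : ∀ k, (((x^k * y^(n-k) * (n.choose k : ℝ) : ℝ) : ℂ) * Complex.I ^ k).re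
      = if k % 2 = 0 then (-1:ℝ)^(k/2) * (x^k * y^(n-k) * (n.choose k : ℝ)) else 0 := by
    intro k
    rw [Complex.re_ofReal_mul, I_pow_re]
    by_cases h : k % 2 = 0 <;> simp [h] <;> ring
  simp only [hterm]
  rw [← Finset.sum_filter_of_ne (p := fun k => k % 2 = 0)
      (fun k _ hk => by by_contra h; exact hk (by simp [if_neg h]))]
  rw [show (Finset.range (n+1)).filter (fun k => k % 2 = 0)
      = (Finset.range (n/2+1)).image (fun ℓ => 2*ℓ) by
    ext k
    simp only [Finset.mem_filter, Finset.mem_image, Finset.mem_range]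
    constructor
    · rintro ⟨h1, h2⟩; exact ⟨k/2, by omega, by omega⟩
    · rintro ⟨ℓ, h1, rfl⟩; exact ⟨by omega, by omega⟩]
  rw [Finset.sum_image (fun a _ b _ h => by omega)]
  unfold G
  rw [Finset.sum_div]
  refine Finset.sum_congr rfl fun ℓ hℓ => ?_
  have hle : 2*ℓ ≤ n := by
    have := Finset.mem_range.mp hℓ; omega
  have h1 : (2*ℓ) % 2 = 0 := by omega
  have h2 : (2*ℓ) / 2 = ℓ := by omega
  rw [if_pos h1, h2, Nat.cast_choose ℝ hle]
  have hfn : (Nat.factorial n : ℝ) ≠ 0 := Nat.cast_ne_zero.mpr (Nat.factorial_ne_zero n)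
  have hf1 : (Nat.factorial (2*ℓ) : ℝ) ≠ 0 := Nat.cast_ne_zero.mpr (Nat.factorial_ne_zero _)
  have hf2 : (Nat.factorial (n - 2*ℓ) : ℝ) ≠ 0 := Nat.cast_ne_zero.mpr (Nat.factorial_ne_zero _)
  rw [zero_add]
  field_simp

private lemma G1_eq (n : ℕ) (x y : ℝ) :
    G 1 n x y = (((y:ℂ) + x*Complex.I)^(n+1)).im / (Nat.factorial (n+1) : ℝ) := by
  rw [zpow_expand, Complex.im_sum]
  have hterm : ∀ k, (((x^k * y^(n+1-k) * ((n+1).choose k : ℝ) : ℝ) : ℂ) * Complex.I ^ k).im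
      = if k % 2 = 1 then (-1:ℝ)^(k/2) * (x^k * y^(n+1-k) * ((n+1).choose k : ℝ)) else 0 := by
    intro k
    rw [Complex.im_ofReal_mul, I_pow_im]
    by_cases h : k % 2 = 1 <;> simp [h] <;> ring
  simp only [hterm]
  rw [← Finset.sum_filter_of_ne (p := fun k => k % 2 = 1)
      (fun k _ hk => by by_contra h; exact hk (by simp [if_neg h]))]
  rw [show (Finset.range (n+1+1)).filter (fun k => k % 2 = 1)
      = (Finset.range (n/2+1)).image (fun ℓ => 2*ℓ+1) by
    ext k
    simp only [Finset.mem_filter, Finset.mem_image, Finset.mem_range]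
    constructor
    · rintro ⟨h1, h2⟩; exact ⟨k/2, by omega, by omega⟩
    · rintro ⟨ℓ, h1, rfl⟩; exact ⟨by omega, by omega⟩]
  rw [Finset.sum_image (fun a _ b _ h => by omega)]
  unfold G
  rw [Finset.sum_div]
  refine Finset.sum_congr rfl fun ℓ hℓ => ?_
  have hle : 2*ℓ+1 ≤ n+1 := by
    have := Finset.mem_range.mp hℓ; omega
  have h1 : (2*ℓ+1) % 2 = 1 := by omega
  have h2 : (2*ℓ+1) / 2 = ℓ := by omega
  have h3 : n + 1 - (2*ℓ+1) = n - 2*ℓ := by omega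
  have h4 : 1 + 2*ℓ = 2*ℓ+1 := by omega
  rw [if_pos h1, h2, Nat.cast_choose ℝ hle, h3, h4]
  have hfn : (Nat.factorial (n+1) : ℝ) ≠ 0 := Nat.cast_ne_zero.mpr (Nat.factorial_ne_zero _)
  have hf1 : (Nat.factorial (2*ℓ+1) : ℝ) ≠ 0 := Nat.cast_ne_zero.mpr (Nat.factorial_ne_zero _)
  have hf2 : (Nat.factorial (n - 2*ℓ) : ℝ) ≠ 0 := Nat.cast_ne_zero.mpr (Nat.factorial_ne_zero _)
  field_simp

private lemma hasDerivAt_zx (x y : ℝ) :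
    HasDerivAt (fun x : ℝ => (y:ℂ) + x * Complex.I) Complex.I x := by
  simpa using ((Complex.ofRealCLM.hasDerivAt (x := x)).mul_const Complex.I).const_add (y:ℂ)

private lemma hasDerivAt_zy (x y : ℝ) :
    HasDerivAt (fun t : ℝ => (t:ℂ) + x * Complex.I) 1 y := by
  simpa using (Complex.ofRealCLM.hasDerivAt (x := y)).add_const ((x:ℝ) * Complex.I)

private lemma pdx_G0 (n : ℕ) (x y : ℝ) :
    pdx (G 0 n) x y
      = ((n:ℂ) * ((y:ℂ) + x*Complex.I)^(n-1) * Complex.I).re / (Nat.factorial n : ℝ) := by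
  unfold pdx
  rw [show (fun t => G 0 n t y) = fun t : ℝ => ((((y:ℂ) + (t:ℂ)*Complex.I)^n).re / (Nat.factorial n : ℝ))
    from funext fun t => G0_eq n t y]
  have h1 := hasDerivAt_pow_comp n (hasDerivAt_zx x y)
  have h2 : HasDerivAt (fun t : ℝ => ((((y:ℂ) + (t:ℂ)*Complex.I))^n).re)
      (((n:ℂ) * ((y:ℂ) + (x:ℂ)*Complex.I)^(n-1) * Complex.I).re) x :=
    Complex.reCLM.hasFDerivAt.comp_hasDerivAt x h1
  rw [deriv_div_const, h2.deriv]

private lemma pdy_G0 (n : ℕ) (x y : ℝ) :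
    pdy (G 0 n) x y
      = ((n:ℂ) * ((y:ℂ) + x*Complex.I)^(n-1)).re / (Nat.factorial n : ℝ) := by
  unfold pdy
  rw [show (fun t : ℝ => G 0 n x t) = fun t : ℝ => ((((t:ℂ) + (x:ℂ)*Complex.I)^n).re / (Nat.factorial n : ℝ))
    from funext fun t => G0_eq n x t]
  have h1 := hasDerivAt_pow_comp n (hasDerivAt_zy x y)
  have h2 : HasDerivAt (fun t : ℝ => ((((t:ℂ) + (x:ℂ)*Complex.I))^n).re)
      (((n:ℂ) * ((y:ℂ) + (x:ℂ)*Complex.I)^(n-1) * 1).re) y :=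
    Complex.reCLM.hasFDerivAt.comp_hasDerivAt y h1
  rw [deriv_div_const, h2.deriv, mul_one]

private lemma pdx_G1 (n : ℕ) (x y : ℝ) :
    pdx (G 1 n) x y
      = (((n:ℂ)+1) * ((y:ℂ) + x*Complex.I)^n * Complex.I).im / (Nat.factorial (n+1) : ℝ) := by
  unfold pdx
  rw [show (fun t => G 1 n t y)
      = fun t : ℝ => ((((y:ℂ) + (t:ℂ)*Complex.I)^(n+1)).im / (Nat.factorial (n+1) : ℝ))
    from funext fun t => G1_eq n t y]
  have h1 := hasDerivAt_pow_comp (n+1) (hasDerivAt_zx x y)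
  rw [Nat.add_sub_cancel] at h1
  have h2 : HasDerivAt (fun t : ℝ => ((((y:ℂ) + (t:ℂ)*Complex.I))^(n+1)).im)
      ((((n+1:ℕ):ℂ) * ((y:ℂ) + (x:ℂ)*Complex.I)^n * Complex.I).im) x :=
    Complex.imCLM.hasFDerivAt.comp_hasDerivAt x h1
  rw [deriv_div_const, h2.deriv]
  push_cast
  ring_nf

private lemma pdy_G1 (n : ℕ) (x y : ℝ) :
    pdy (G 1 n) x y
      = (((n:ℂ)+1) * ((y:ℂ) + x*Complex.I)^n).im / (Nat.factorial (n+1) : ℝ) := by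
  unfold pdy
  rw [show (fun t : ℝ => G 1 n x t)
      = fun t : ℝ => ((((t:ℂ) + (x:ℂ)*Complex.I)^(n+1)).im / (Nat.factorial (n+1) : ℝ))
    from funext fun t => G1_eq n x t]
  have h1 := hasDerivAt_pow_comp (n+1) (hasDerivAt_zy x y)
  rw [Nat.add_sub_cancel] at h1
  have h2 : HasDerivAt (fun t : ℝ => ((((t:ℂ) + (x:ℂ)*Complex.I))^(n+1)).im)
      ((((n+1:ℕ):ℂ) * ((y:ℂ) + (x:ℂ)*Complex.I)^n * 1).im) y :=
    Complex.imCLM.hasFDerivAt.comp_hasDerivAt y h1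
  rw [deriv_div_const, h2.deriv, mul_one]
  push_cast
  ring_nf

private lemma alg0 (z : ℂ) (u v c : ℝ) (m : ℕ) :
    ((m:ℂ) * z * Complex.I).re * u / c - ((m:ℂ) * z).re * v / c
      = (z * (((u:ℝ):ℂ) + (v:ℝ) * Complex.I) * (((-((m:ℝ)/c)):ℝ):ℂ)).im := by
  simp [Complex.mul_re, Complex.mul_im, Complex.I_re, Complex.I_im,
    Complex.ofReal_re, Complex.ofReal_im, Complex.natCast_re, Complex.natCast_im]
  ring

private lemma alg1 (z : ℂ) (u v c : ℝ) (m : ℕ) :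
    ((m:ℂ) * z * Complex.I).im * u / c - ((m:ℂ) * z).im * v / c
      = (z * (((u:ℝ):ℂ) + (v:ℝ) * Complex.I) * ((((m:ℝ)/c):ℝ):ℂ)).re := by
  simp [Complex.mul_re, Complex.mul_im, Complex.I_re, Complex.I_im,
    Complex.ofReal_re, Complex.ofReal_im, Complex.natCast_re, Complex.natCast_im]
  ring

/-- For a regular smooth parameterization through the origin and `a₀ > 0`, the
determinant `g_{0,p,p}·g̃_{1,p-1,p-1} - g_{1,p-1,p}·g̃_{0,p,p-1}` is positive
for every `p = 1,…,M`. -/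
theorem transmission_determinant_pos (M : ℕ) (ε a₀ : ℝ) (hε : 0 < ε) (ha : 0 < a₀)
    (r s : ℝ → ℝ)
    (hr : ContDiffOn ℝ (⊤ : ℕ∞) r (Set.Ioo (-ε) ε))
    (hs : ContDiffOn ℝ (⊤ : ℕ∞) s (Set.Ioo (-ε) ε))
    (hr0 : r 0 = 0) (hs0 : s 0 = 0)
    (hreg : 0 < (deriv r 0) ^ 2 + (deriv s 0) ^ 2) :
    ∀ p : ℕ, 1 ≤ p → p ≤ M →
      0 < gcoef r s 0 p p * gtcoef a₀ r s 1 (p - 1) (p - 1) -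
            gcoef r s 1 (p - 1) p * gtcoef a₀ r s 0 p (p - 1) := by
  intro p hp1 _
  obtain ⟨q, rfl⟩ : ∃ q, p = q + 1 := ⟨p - 1, by omega⟩
  simp only [Nat.add_sub_cancel]
  set U : Set ℝ := Set.Ioo (-ε) ε with hUdef
  have hU : IsOpen U := isOpen_Ioo
  have h0 : (0:ℝ) ∈ U := by
    rw [hUdef]; exact Set.mem_Ioo.mpr ⟨by linarith, hε⟩
  have hw : ContDiffOn ℝ (⊤:ℕ∞) (fun t => ((s t : ℝ):ℂ) + ((r t : ℝ):ℂ) * Complex.I) U :=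
    (Complex.ofRealCLM.contDiff.comp_contDiffOn hs).add
      ((Complex.ofRealCLM.contDiff.comp_contDiffOn hr).mul contDiffOn_const)
  set w : ℝ → ℂ := fun t => ((s t : ℝ):ℂ) + ((r t : ℝ):ℂ) * Complex.I with hwdef
  have hw0 : w 0 = 0 := by simp [hwdef, hr0, hs0]
  set W : ℂ := ((deriv s 0 : ℝ):ℂ) + ((deriv r 0 : ℝ):ℂ) * Complex.I with hWdef
  have hdW : deriv w 0 = W := by
    have hds := (diffAt hU hs h0).hasDerivAt
    have hdr := (diffAt hU hr h0).hasDerivAt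
    have h1 : HasDerivAt (fun t => ((s t : ℝ):ℂ)) ((deriv s 0 : ℝ):ℂ) 0 :=
      Complex.ofRealCLM.hasFDerivAt.comp_hasDerivAt 0 hds
    have h2 : HasDerivAt (fun t => ((r t : ℝ):ℂ)) ((deriv r 0 : ℝ):ℂ) 0 :=
      Complex.ofRealCLM.hasFDerivAt.comp_hasDerivAt 0 hdr
    exact (h1.add (h2.mul_const Complex.I)).deriv
  have hu1 : ContDiffOn ℝ (⊤:ℕ∞)
      (fun t => ((deriv s t : ℝ):ℂ) + ((deriv r t : ℝ):ℂ) * Complex.I) U :=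
    (Complex.ofRealCLM.contDiff.comp_contDiffOn (smoothOn_deriv hU hs)).add
      ((Complex.ofRealCLM.contDiff.comp_contDiffOn (smoothOn_deriv hU hr)).mul contDiffOn_const)
  have hfq : (0:ℝ) < (Nat.factorial q : ℝ) := Nat.cast_pos.mpr (Nat.factorial_pos _)
  have hfq1 : (0:ℝ) < (Nat.factorial (q+1) : ℝ) := Nat.cast_pos.mpr (Nat.factorial_pos _)
  -- the four coefficients
  have e1 : gcoef r s 0 (q+1) (q+1) = (1/(Nat.factorial (q+1) : ℝ)) * (W^(q+1)).re := by
    unfold gcoef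
    congr 1
    have hfn : (fun t => G 0 (q+1) (r t) (s t))
        = fun t => (w t ^ (q+1) * (((1/(Nat.factorial (q+1):ℝ)):ℝ):ℂ)).re := by
      funext t
      rw [G0_eq (q+1) (r t) (s t), hwdef]
      simp only [Complex.mul_re, Complex.ofReal_re, Complex.ofReal_im, mul_zero, sub_zero]
      ring
    rw [hfn]
    rw [iteratedDeriv_re' hU h0 (q+1) _ ((hw.pow _).mul contDiffOn_const)]
    rw [keyD hU h0 hw hw0 (q+1) (q+1) le_rfl _ contDiffOn_const, if_pos rfl, hdW]
    rw [show ((Nat.factorial (q+1) : ℕ):ℂ) * W^(q+1) * (((1/(Nat.factorial (q+1):ℝ)):ℝ):ℂ)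
        = (((Nat.factorial (q+1):ℝ) * (1/(Nat.factorial (q+1):ℝ)) : ℝ):ℂ) * W^(q+1) by
      push_cast; ring]
    rw [mul_one_div, div_self (ne_of_gt hfq1)]
    simp [Complex.re_ofReal_mul]
  have e2 : gcoef r s 1 q (q+1) = (1/(Nat.factorial (q+1) : ℝ)) * (W^(q+1)).im := by
    unfold gcoef
    congr 1
    have hfn : (fun t => G 1 q (r t) (s t))
        = fun t => (w t ^ (q+1) * (((1/(Nat.factorial (q+1):ℝ)):ℝ):ℂ)).im := by
      funext t
      rw [G1_eq q (r t) (s t), hwdef]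
      simp only [Complex.mul_im, Complex.ofReal_re, Complex.ofReal_im, mul_zero, zero_add,
        add_zero]
      ring
    rw [hfn]
    rw [iteratedDeriv_im' hU h0 (q+1) _ ((hw.pow _).mul contDiffOn_const)]
    rw [keyD hU h0 hw hw0 (q+1) (q+1) le_rfl _ contDiffOn_const, if_pos rfl, hdW]
    rw [show ((Nat.factorial (q+1) : ℕ):ℂ) * W^(q+1) * (((1/(Nat.factorial (q+1):ℝ)):ℝ):ℂ)
        = (((Nat.factorial (q+1):ℝ) * (1/(Nat.factorial (q+1):ℝ)) : ℝ):ℂ) * W^(q+1) by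
      push_cast; ring]
    rw [mul_one_div, div_self (ne_of_gt hfq1)]
    simp [Complex.im_ofReal_mul]
  have e3 : gtcoef a₀ r s 1 q q = (a₀/(Nat.factorial q : ℝ)) * (W^(q+1)).re := by
    unfold gtcoef
    congr 1
    have hfn : (fun t => pdx (G 1 q) (r t) (s t) * deriv s t
          - pdy (G 1 q) (r t) (s t) * deriv r t)
        = fun t => (w t ^ q * ((((deriv s t : ℝ):ℂ) + ((deriv r t : ℝ):ℂ) * Complex.I)
            * (((((q+1:ℕ):ℝ)/(Nat.factorial (q+1):ℝ)):ℝ):ℂ))).re := by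
      funext t
      rw [pdx_G1 q (r t) (s t), pdy_G1 q (r t) (s t), hwdef]
      rw [show ((q:ℂ)+1) = ((q+1:ℕ):ℂ) by push_cast; ring]
      rw [div_mul_eq_mul_div, div_mul_eq_mul_div, ← mul_assoc]
      exact alg1 _ (deriv s t) (deriv r t) _ (q+1)
    rw [hfn]
    rw [iteratedDeriv_re' hU h0 q _ ((hw.pow _).mul (hu1.mul contDiffOn_const))]
    rw [keyD hU h0 hw hw0 q q le_rfl _ (hu1.mul contDiffOn_const), if_pos rfl, hdW]
    rw [show ((Nat.factorial q : ℕ):ℂ) * W^q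
          * ((((deriv s 0 : ℝ):ℂ) + ((deriv r 0 : ℝ):ℂ) * Complex.I)
            * (((((q+1:ℕ):ℝ)/(Nat.factorial (q+1):ℝ)):ℝ):ℂ))
        = (((Nat.factorial q:ℝ) * (((q+1:ℕ):ℝ)/(Nat.factorial (q+1):ℝ)) : ℝ):ℂ) * W^(q+1) by
      rw [hWdef]; push_cast; rw [pow_succ]; ring]
    have hc : (Nat.factorial q:ℝ) * (((q+1:ℕ):ℝ)/(Nat.factorial (q+1):ℝ)) = 1 := by
      rw [Nat.factorial_succ]; push_cast; field_simp
    rw [hc]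
    simp [Complex.re_ofReal_mul]
  have e4 : gtcoef a₀ r s 0 (q+1) q = (a₀/(Nat.factorial q : ℝ)) * (-(W^(q+1)).im) := by
    unfold gtcoef
    congr 1
    have hfn : (fun t => pdx (G 0 (q+1)) (r t) (s t) * deriv s t
          - pdy (G 0 (q+1)) (r t) (s t) * deriv r t)
        = fun t => (w t ^ q * ((((deriv s t : ℝ):ℂ) + ((deriv r t : ℝ):ℂ) * Complex.I)
            * (((-(((q+1:ℕ):ℝ)/(Nat.factorial (q+1):ℝ))):ℝ):ℂ))).im := by
      funext t
      rw [pdx_G0 (q+1) (r t) (s t), pdy_G0 (q+1) (r t) (s t), hwdef]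
      rw [Nat.add_sub_cancel]
      rw [div_mul_eq_mul_div, div_mul_eq_mul_div, ← mul_assoc]
      exact alg0 _ (deriv s t) (deriv r t) _ (q+1)
    rw [hfn]
    rw [iteratedDeriv_im' hU h0 q _ ((hw.pow _).mul (hu1.mul contDiffOn_const))]
    rw [keyD hU h0 hw hw0 q q le_rfl _ (hu1.mul contDiffOn_const), if_pos rfl, hdW]
    rw [show ((Nat.factorial q : ℕ):ℂ) * W^q
          * ((((deriv s 0 : ℝ):ℂ) + ((deriv r 0 : ℝ):ℂ) * Complex.I)
            * (((-(((q+1:ℕ):ℝ)/(Nat.factorial (q+1):ℝ))):ℝ):ℂ))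
        = (((Nat.factorial q:ℝ) * (-(((q+1:ℕ):ℝ)/(Nat.factorial (q+1):ℝ))) : ℝ):ℂ) * W^(q+1) by
      rw [hWdef]; push_cast; rw [pow_succ]; ring]
    have hc : (Nat.factorial q:ℝ) * (-(((q+1:ℕ):ℝ)/(Nat.factorial (q+1):ℝ))) = -1 := by
      rw [Nat.factorial_succ]; push_cast; field_simp
    rw [hc]
    simp [Complex.im_ofReal_mul]
  rw [e1, e2, e3, e4]
  have hAB : (W^(q+1)).re^2 + (W^(q+1)).im^2
      = ((deriv r 0)^2 + (deriv s 0)^2)^(q+1) := by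
    have h1 : (W^(q+1)).re^2 + (W^(q+1)).im^2 = Complex.normSq (W^(q+1)) := by
      rw [Complex.normSq_apply]; ring
    rw [h1, map_pow]
    congr 1
    rw [hWdef]
    simp [Complex.normSq_apply, Complex.add_re, Complex.add_im, Complex.mul_re,
      Complex.mul_im, Complex.I_re, Complex.I_im]
    ring
  have hpos : (0:ℝ) < ((deriv r 0)^2 + (deriv s 0)^2)^(q+1) := pow_pos hreg _
  have key : (1/(Nat.factorial (q+1):ℝ)) * (W^(q+1)).re
        * ((a₀/(Nat.factorial q:ℝ)) * (W^(q+1)).re)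
      - (1/(Nat.factorial (q+1):ℝ)) * (W^(q+1)).im
        * ((a₀/(Nat.factorial q:ℝ)) * (-(W^(q+1)).im))
      = a₀ * ((W^(q+1)).re^2 + (W^(q+1)).im^2)
          / ((Nat.factorial (q+1):ℝ) * (Nat.factorial q:ℝ)) := by
    field_simp
    ring
  rw [key, hAB]
  exact div_pos (mul_pos ha hpos) (mul_pos hfq1 hfq)
end
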